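/- For every (μ, σ) ∈ ℝ × (0, ∞), f((y - μ)/σ)/σ is asymptotically equivalent to f(y) as y → +∞, i.e. the ratio (f((y-μ)/σ)/σ)/f(y) tends to 1. -/

import Mathlib

open Filter Real

private lemma linratio (c d : ℝ) :
    Tendsto (fun y : ℝ => (y + c) / (y + d)) atTop (nhds 1) := by
  have h1 : Tendsto (fun y : ℝ => y + d) atTop atTop :=
    tendsto_atTop_add_const_right _ _ tendsto_id
  have h2 : Tendsto (fun y : ℝ => (c - d) / (y + d)) atTop (nhds 0) :=
    Tendsto.div_atTop tendsto_const_nhds h1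
  have h3 : Tendsto (fun y : ℝ => 1 + (c - d) / (y + d)) atTop (nhds 1) := by
    simpa using tendsto_const_nhds.add h2
  refine h3.congr' ?_
  filter_upwards [h1.eventually_ne_atTop 0] with y hy
  field_simp
  ring

private lemma ratio_one {n d : ℝ → ℝ} (hd : Tendsto d atTop atTop) {L : ℝ}
    (hnd : Tendsto (fun y => n y - d y) atTop (nhds L)) :
    Tendsto (fun y => n y / d y) atTop (nhds 1) := by
  have h2 : Tendsto (fun y => (n y - d y) / d y) atTop (nhds 0) :=
    Tendsto.div_atTop hnd hd
  have h3 : Tendsto (fun y => 1 + (n y - d y) / d y) atTop (nhds 1) := by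
    simpa using tendsto_const_nhds.add h2
  refine h3.congr' ?_
  filter_upwards [hd.eventually_ne_atTop 0] with y hy
  field_simp
  ring

theorem ratio_tendsto_one (γ : ℝ) (hγ : 0 < γ) (f : ℝ → ℝ)
    (hf : ∀ z : ℝ, f z = (γ / 2) * (1 / (1 + |z|)) * (1 / (1 + Real.log (1 + |z|)) ^ (1 + γ)))
    (μ σ : ℝ) (hσ : 0 < σ) :
    Filter.Tendsto (fun y : ℝ => (f ((y - μ) / σ) / σ) / f y) Filter.atTop (nhds 1) := by
  set t : ℝ → ℝ := fun y => (y - μ) / σ with ht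
  -- first factor
  have hF1 : Tendsto (fun y => (1 + y) / (σ * (1 + t y))) atTop (nhds 1) := by
    refine (linratio 1 (σ - μ)).congr fun y => ?_
    have : σ * (1 + t y) = y + (σ - μ) := by
      simp only [ht]; field_simp; ring
    rw [this]; ring_nf
  -- denominator of log-ratio tends to atTop
  have hb : Tendsto (fun y => 1 + t y) atTop atTop := by
    have : Tendsto (fun y : ℝ => (y + (σ - μ)) / σ) atTop atTop :=
      (tendsto_atTop_add_const_right _ _ tendsto_id).atTop_div_const hσ
    refine this.congr fun y => ?_
    simp only [ht]; field_simp; ring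
  have hd : Tendsto (fun y => 1 + Real.log (1 + t y)) atTop atTop :=
    tendsto_atTop_add_const_left _ 1 (Real.tendsto_log_atTop.comp hb)
  -- difference of logs tends to log σ
  have hq : Tendsto (fun y => (1 + y) / (1 + t y)) atTop (nhds σ) := by
    have h1 : Tendsto (fun y : ℝ => σ * ((y + 1) / (y + (σ - μ)))) atTop (nhds (σ * 1)) :=
      tendsto_const_nhds.mul (linratio 1 (σ - μ))
    rw [mul_one] at h1
    refine h1.congr fun y => ?_
    have h1t : 1 + t y = (y + (σ - μ)) / σ := by
      simp only [ht]; field_simp; try ring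
    rw [h1t, div_div_eq_mul_div]; ring
  have hnd : Tendsto (fun y => (1 + Real.log (1 + y)) - (1 + Real.log (1 + t y)))
      atTop (nhds (Real.log σ)) := by
    have hlog : Tendsto (fun y => Real.log ((1 + y) / (1 + t y))) atTop (nhds (Real.log σ)) :=
      ((Real.continuousAt_log hσ.ne').tendsto).comp hq
    refine hlog.congr' ?_
    filter_upwards [eventually_ge_atTop (max 0 μ), hb.eventually_gt_atTop 0] with y hy hby
    have h0 : (0:ℝ) ≤ y := le_trans (le_max_left _ _) hy
    rw [Real.log_div (by positivity) hby.ne']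
    ring
  have hF2 : Tendsto (fun y => ((1 + Real.log (1 + y)) / (1 + Real.log (1 + t y))) ^ (1 + γ))
      atTop (nhds 1) := by
    have := (ratio_one hd hnd).rpow_const
      (p := 1 + γ) (Or.inr (by positivity))
    simpa using this
  have hmain : Tendsto (fun y => ((1 + y) / (σ * (1 + t y))) *
      ((1 + Real.log (1 + y)) / (1 + Real.log (1 + t y))) ^ (1 + γ)) atTop (nhds 1) := by
    simpa using hF1.mul hF2
  refine hmain.congr' ?_
  filter_upwards [eventually_ge_atTop (max 0 μ)] with y hy
  have h0 : (0:ℝ) ≤ y := le_trans (le_max_left _ _) hy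
  have hμ : μ ≤ y := le_trans (le_max_right _ _) hy
  have hty : 0 ≤ t y := div_nonneg (by linarith) hσ.le
  have ha : 0 < 1 + y := by linarith
  have hbb : 0 < 1 + t y := by linarith
  have hLa : 0 < 1 + Real.log (1 + y) := by
    have := Real.log_nonneg (by linarith : (1:ℝ) ≤ 1 + y); linarith
  have hLb : 0 < 1 + Real.log (1 + t y) := by
    have := Real.log_nonneg (by linarith : (1:ℝ) ≤ 1 + t y); linarith
  have hP : 0 < (1 + Real.log (1 + y)) ^ (1 + γ) := Real.rpow_pos_of_pos hLa _
  have hQ : 0 < (1 + Real.log (1 + t y)) ^ (1 + γ) := Real.rpow_pos_of_pos hLb _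
  rw [hf, hf, abs_of_nonneg h0, abs_of_nonneg hty,
    Real.div_rpow hLa.le hLb.le]
  have hC : γ / 2 ≠ 0 := by positivity
  field_simp
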